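/- Let k be a field of characteristic 5, R = k[X, Z], q = Z² + X³, and let L = R[1/(X·q)] be the localization of R at the powers of X·q. Let w = τ(Z⁵·X^{−5}·q^{−1}) ∈ W(L) (5-typical Witt vectors). Then there exist u, v ∈ W(L) such that every coefficient of u lies in the image of R[1/X] in L, every coefficient of v lies in the image of R[1/q] in L, and the Witt vector w + V(τ(Z·X^{−1}·q^{−1})) − u − v has vanishing coefficients in degrees 0 and 1. (This is the computation showing that the pullback of the generating local cohomology class along the α₅-quotient with an E₈^0 singularity, given by x = X⁵, y = Z² + X³, z = Z⁵, satisfies π*(ε, 0) ≡ V(−Z/(Xy)) in W₂ modulo W₂(B[1/x]) + W₂(B[1/y]).) -/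
import Mathlib


instance : Fact (Nat.Prime 5) := ⟨by norm_num⟩

open MvPolynomial

set_option maxHeartbeats 2000000
set_option synthInstance.maxHeartbeats 400000



namespace AlphaAuxE8

open WittVector

lemma wittAdd_five_one : (WittVector.wittAdd 5 1 : MvPolynomial (Fin 2 × ℕ) ℤ) =
    X (0,1) + X (1,1) - (X (0,0)^4 * X (1,0) + 2 * X (0,0)^3 * X (1,0)^2
      + 2 * X (0,0)^2 * X (1,0)^3 + X (0,0) * X (1,0)^4) := by
  have key := wittStructureInt_prop 5 (X 0 + X 1 : MvPolynomial (Fin 2) ℤ) 1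
  have h0 : wittStructureInt 5 (X 0 + X 1 : MvPolynomial (Fin 2) ℤ) 0
      = X (0,0) + X (1,0) := WittVector.wittAdd_zero (p := 5)
  simp only [wittPolynomial_one, map_add, map_mul, map_pow, bind₁_X_right, bind₁_C_right,
    rename_X, rename_C, Nat.cast_ofNat, map_ofNat, h0] at key
  have five : (5 : MvPolynomial (Fin 2 × ℕ) ℤ) ≠ 0 := by
    intro h
    have := congrArg MvPolynomial.constantCoeff h
    rw [map_ofNat] at this; norm_num at this
  apply mul_left_cancel₀ five
  show (5 : MvPolynomial (Fin 2 × ℕ) ℤ) * wittStructureInt 5 (X 0 + X 1) 1 = _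
  linear_combination key

lemma wittNeg_five_one : (WittVector.wittNeg 5 1 : MvPolynomial (Fin 1 × ℕ) ℤ) = - X (0,1) := by
  have key := wittStructureInt_prop 5 (-X 0 : MvPolynomial (Fin 1) ℤ) 1
  have h0 : wittStructureInt 5 (-X 0 : MvPolynomial (Fin 1) ℤ) 0
      = - X (0,0) := WittVector.wittNeg_zero (p := 5)
  simp only [wittPolynomial_one, map_add, map_mul, map_pow, map_neg, bind₁_X_right, bind₁_C_right,
    rename_X, rename_C, Nat.cast_ofNat, map_ofNat, h0] at key
  have five : (5 : MvPolynomial (Fin 1 × ℕ) ℤ) ≠ 0 := by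
    intro h
    have := congrArg MvPolynomial.constantCoeff h
    rw [map_ofNat] at this; norm_num at this
  apply mul_left_cancel₀ five
  show (5 : MvPolynomial (Fin 1 × ℕ) ℤ) * wittStructureInt 5 (-X 0) 1 = _
  linear_combination key

variable {R : Type*} [CommRing R]

lemma teich_one (r : R) : (teichmuller 5 r).coeff 1 = 0 :=
  teichmuller_coeff_pos 5 r 1 one_pos

lemma versch_one (x : WittVector 5 R) : (verschiebung x).coeff 1 = x.coeff 0 :=
  verschiebung_coeff_succ x 0

lemma add_one (x y : WittVector 5 R) : (x + y).coeff 1 = x.coeff 1 + y.coeff 1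
    - (x.coeff 0^4 * y.coeff 0 + 2 * x.coeff 0^3 * y.coeff 0^2
      + 2 * x.coeff 0^2 * y.coeff 0^3 + x.coeff 0 * y.coeff 0^4) := by
  rw [add_coeff, wittAdd_five_one]
  simp [peval, Function.uncurry, map_ofNat]
  try ring

lemma neg_zero' (x : WittVector 5 R) : (-x).coeff 0 = - x.coeff 0 := by
  rw [neg_coeff, WittVector.wittNeg_zero]
  simp [peval, Function.uncurry]

lemma neg_one' (x : WittVector 5 R) : (-x).coeff 1 = - x.coeff 1 := by
  rw [neg_coeff, wittNeg_five_one]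
  simp [peval, Function.uncurry]

lemma sub_zero' (x y : WittVector 5 R) : (x - y).coeff 0 = x.coeff 0 - y.coeff 0 := by
  rw [sub_eq_add_neg, add_coeff_zero, neg_zero']
  ring

lemma sub_one (x y : WittVector 5 R) : (x - y).coeff 1 = x.coeff 1 - y.coeff 1
    + (x.coeff 0^4 * y.coeff 0 - 2 * x.coeff 0^3 * y.coeff 0^2
      + 2 * x.coeff 0^2 * y.coeff 0^3 - x.coeff 0 * y.coeff 0^4) := by
  rw [sub_eq_add_neg, add_one, neg_one', neg_zero']
  ring

end AlphaAuxE8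

def locSubringE8 {R S : Type*} [CommRing R] [CommRing S] (ι : R →+* S) (D : R) : Subring S where
  carrier := {l | ∃ s t, l * ι D ^ t = ι s}
  zero_mem' := ⟨0, 0, by simp⟩
  one_mem' := ⟨1, 0, by simp⟩
  add_mem' := by
    rintro a b ⟨s1, t1, h1⟩ ⟨s2, t2, h2⟩
    exact ⟨s1 * D ^ t2 + s2 * D ^ t1, t1 + t2, by
      rw [map_add, map_mul, map_mul, map_pow, map_pow, ← h1, ← h2]; ring⟩
  mul_mem' := by
    rintro a b ⟨s1, t1, h1⟩ ⟨s2, t2, h2⟩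
    exact ⟨s1 * s2, t1 + t2, by rw [map_mul, ← h1, ← h2]; ring⟩
  neg_mem' := by
    rintro a ⟨s, t, h1⟩
    exact ⟨-s, t, by rw [map_neg, ← h1]; ring⟩

lemma mem_locSubringE8 {R S : Type*} [CommRing R] [CommRing S] (ι : R →+* S) (D : R) (l : S) :
    l ∈ locSubringE8 ι D ↔ ∃ s t, l * ι D ^ t = ι s := Iff.rfl

theorem I1gen {S : Type*} [CommRing S] (x z ix iq : S) (hX : x * ix = 1)
    (hQ : (z^2 + x^3) * iq = 1) (hchar : (5 : S) = 0) :
    (z^5 * ix^5 * iq) - ((z^3 - z * x^3) * ix^5) - (z * x * iq) = 0 := by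
  linear_combination (x^1 * z^1 * iq^1 + x^2 * z^1 * ix^1 * iq^1 + x^3 * z^1 * ix^2 * iq^1 + x^4 * z^1 * ix^3 * iq^1 + x^5 * z^1 * ix^4 * iq^1) * hX + (z^3 * ix^5 + (-1 : S) * x^3 * z^1 * ix^5) * hQ + (0) * hchar

theorem I2gen {S : Type*} [CommRing S] (x z ix iq : S) (hX : x * ix = 1)
    (hQ : (z^2 + x^3) * iq = 1) (hchar : (5 : S) = 0) :
    (z * ix * iq) - ((z^11 + 3 * x^6 * z^7 + 2 * x^12 * z^3 + 4 * x^15 * z) * ix^19) - ((x^2 * z^5 + 2 * x^8 * z) * iq^4) - ((z^5 * ix^5 * iq)^4*(-((z^3 - z * x^3) * ix^5)) + 2*(z^5 * ix^5 * iq)^3*(-((z^3 - z * x^3) * ix^5))^2 + 2*(z^5 * ix^5 * iq)^2*(-((z^3 - z * x^3) * ix^5))^3 + (z^5 * ix^5 * iq)*(-((z^3 - z * x^3) * ix^5))^4) - (((z^5 * ix^5 * iq) - ((z^3 - z * x^3) * ix^5))^4*(-(z * x * iq)) + 2*((z^5 * ix^5 * iq) - ((z^3 - z * x^3) * ix^5))^3*(-(z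 * x * iq))^2 + 2*((z^5 * ix^5 * iq) - ((z^3 - z * x^3) * ix^5))^2*(-(z * x * iq))^3 + ((z^5 * ix^5 * iq) - ((z^3 - z * x^3) * ix^5))*(-(z * x * iq))^4) = 0 := by
  linear_combination ((99 : S) * z^1 * ix^1 * iq^1 + (-70 : S) * z^1 * ix^4 + (40 : S) * z^3 * ix^7 + (-25 : S) * z^5 * ix^10 + (10 : S) * z^7 * ix^13 + (-5 : S) * z^9 * ix^16 + z^11 * ix^19 + (99 : S) * x^1 * z^1 * ix^2 * iq^1 + (-70 : S) * x^1 * z^1 * ix^5 + (40 : S) * x^1 * z^3 * ix^8 + (-25 : S) * x^1 * z^5 * ix^11 + (10 : S) * x^1 * z^7 * ix^14 + (-5 : S) * x^1 * z^9 * ix^17 + x^1 * z^11 * ix^20 + (-44 : S) * x^2 * z^1 * iq^2 + (99 : S) * x^2 * z^1 * ix^3 * iq^1 + (-70 : S) * x^2 * z^1 * ix^6 + (40 : S) * x^2 * z^3 * ix^9 + (-25 : S) * x^2 * z^5 * ix^12 + (10 : S) * x^2 * z^7 * ix^15 + (-5 : S) * x^2 * z^9 * ix^18 + x^2 * z^11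 * ix^21 + (-44 : S) * x^3 * z^1 * ix^1 * iq^2 + (99 : S) * x^3 * z^1 * ix^4 * iq^1 + (-70 : S) * x^3 * z^1 * ix^7 + (40 : S) * x^3 * z^3 * ix^10 + (-25 : S) * x^3 * z^5 * ix^13 + (10 : S) * x^3 * z^7 * ix^16 + (-5 : S) * x^3 * z^9 * ix^19 + x^3 * z^11 * ix^22 + (-44 : S) * x^4 * z^1 * ix^2 * iq^2 + (99 : S) * x^4 * z^1 * ix^5 * iq^1 + (-70 : S) * x^4 * z^1 * ix^8 + (40 : S) * x^4 * z^3 * ix^11 + (-25 : S) * x^4 * z^5 * ix^14 + (10 : S) * x^4 * z^7 * ix^17 + (-5 : S) * x^4 * z^9 * ix^20 + x^4 * z^11 * ix^23 + (13 : S) * x^5 * z^1 * iq^3 + (-44 : S) * x^5 * z^1 * ix^3 * iq^2 + (99 : S) * x^5 * z^1 * ix^6 * iq^1 + (-70 : S) * x^5 * z^1 * ix^9 + (40 : S) * x^5 * z^3 * ix^12 + (-25 : S) * x^5 * z^5 * ix^15 + (10 : S) * x^5 * z^7 * ix^18 + (-5 : S) * x^5 * z^9 * ix^21 + x^5 * z^11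 * ix^24 + (13 : S) * x^6 * z^1 * ix^1 * iq^3 + (-44 : S) * x^6 * z^1 * ix^4 * iq^2 + (99 : S) * x^6 * z^1 * ix^7 * iq^1 + (-70 : S) * x^6 * z^1 * ix^10 + (40 : S) * x^6 * z^3 * ix^13 + (-25 : S) * x^6 * z^5 * ix^16 + (13 : S) * x^6 * z^7 * ix^19 + (-5 : S) * x^6 * z^9 * ix^22 + (13 : S) * x^7 * z^1 * ix^2 * iq^3 + (-44 : S) * x^7 * z^1 * ix^5 * iq^2 + (99 : S) * x^7 * z^1 * ix^8 * iq^1 + (-70 : S) * x^7 * z^1 * ix^11 + (40 : S) * x^7 * z^3 * ix^14 + (-25 : S) * x^7 * z^5 * ix^17 + (13 : S) * x^7 * z^7 * ix^20 + (-5 : S) * x^7 * z^9 * ix^23 + (-2 : S) * x^8 * z^1 * iq^4 + (13 : S) * x^8 * z^1 * ix^3 * iq^3 + (-44 : S) * x^8 * z^1 * ix^6 * iq^2 + (99 : S) * x^8 * z^1 * ix^9 * iq^1 + (-70 : S) * x^8 * z^1 * ix^12 + (40 : S) * x^8 * z^3 * ix^15 + (-25 : S) * x^8 * z^5 * ix^18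 + (13 : S) * x^8 * z^7 * ix^21 + (-5 : S) * x^8 * z^9 * ix^24 + (-2 : S) * x^9 * z^1 * ix^1 * iq^4 + (13 : S) * x^9 * z^1 * ix^4 * iq^3 + (-44 : S) * x^9 * z^1 * ix^7 * iq^2 + (99 : S) * x^9 * z^1 * ix^10 * iq^1 + (-70 : S) * x^9 * z^1 * ix^13 + (40 : S) * x^9 * z^3 * ix^16 + (-25 : S) * x^9 * z^5 * ix^19 + (13 : S) * x^9 * z^7 * ix^22 + (-2 : S) * x^10 * z^1 * ix^2 * iq^4 + (14 : S) * x^10 * z^1 * ix^5 * iq^3 + (-44 : S) * x^10 * z^1 * ix^8 * iq^2 + (99 : S) * x^10 * z^1 * ix^11 * iq^1 + (-70 : S) * x^10 * z^1 * ix^14 + (40 : S) * x^10 * z^3 * ix^17 + (-25 : S) * x^10 * z^5 * ix^20 + (13 : S) * x^10 * z^7 * ix^23 + (-2 : S) * x^11 * z^1 * ix^3 * iq^4 + (14 : S) * x^11 * z^1 * ix^6 * iq^3 + (-44 : S) * x^11 * z^1 * ix^9 * iq^2 + (99 : S) * x^11 * z^1 * ix^12 * iq^1 + (-70 : S) * x^11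 * z^1 * ix^15 + (40 : S) * x^11 * z^3 * ix^18 + (-25 : S) * x^11 * z^5 * ix^21 + (13 : S) * x^11 * z^7 * ix^24 + (-2 : S) * x^12 * z^1 * ix^4 * iq^4 + (14 : S) * x^12 * z^1 * ix^7 * iq^3 + (-44 : S) * x^12 * z^1 * ix^10 * iq^2 + (99 : S) * x^12 * z^1 * ix^13 * iq^1 + (-70 : S) * x^12 * z^1 * ix^16 + (42 : S) * x^12 * z^3 * ix^19 + (-25 : S) * x^12 * z^5 * ix^22 + (-4 : S) * x^13 * z^1 * ix^5 * iq^4 + (14 : S) * x^13 * z^1 * ix^8 * iq^3 + (-44 : S) * x^13 * z^1 * ix^11 * iq^2 + (99 : S) * x^13 * z^1 * ix^14 * iq^1 + (-70 : S) * x^13 * z^1 * ix^17 + (42 : S) * x^13 * z^3 * ix^20 + (-25 : S) * x^13 * z^5 * ix^23 + (-4 : S) * x^14 * z^1 * ix^6 * iq^4 + (14 : S) * x^14 * z^1 * ix^9 * iq^3 + (-44 : S) * x^14 * z^1 * ix^12 * iq^2 + (99 : S) * x^14 * z^1 * ix^15 * iq^1 + (-70 : S) * x^14 * z^1 * ix^18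 + (42 : S) * x^14 * z^3 * ix^21 + (-25 : S) * x^14 * z^5 * ix^24 + (-4 : S) * x^15 * z^1 * ix^7 * iq^4 + (12 : S) * x^15 * z^1 * ix^10 * iq^3 + (-44 : S) * x^15 * z^1 * ix^13 * iq^2 + (99 : S) * x^15 * z^1 * ix^16 * iq^1 + (-66 : S) * x^15 * z^1 * ix^19 + (42 : S) * x^15 * z^3 * ix^22 + x^16 * z^1 * ix^5 * iq^5 + (-4 : S) * x^16 * z^1 * ix^8 * iq^4 + (12 : S) * x^16 * z^1 * ix^11 * iq^3 + (-44 : S) * x^16 * z^1 * ix^14 * iq^2 + (99 : S) * x^16 * z^1 * ix^17 * iq^1 + (-66 : S) * x^16 * z^1 * ix^20 + (42 : S) * x^16 * z^3 * ix^23 + x^17 * z^1 * ix^6 * iq^5 + (-4 : S) * x^17 * z^1 * ix^9 * iq^4 + (12 : S) * x^17 * z^1 * ix^12 * iq^3 + (-44 : S) * x^17 * z^1 * ix^15 * iq^2 + (99 : S) * x^17 * z^1 * ix^18 * iq^1 + (-66 : S) * x^17 * z^1 * ix^21 + (42 : S) * x^17 * z^3 * ix^24 + x^18 * z^1 * ix^7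 * iq^5 + (12 : S) * x^18 * z^1 * ix^13 * iq^3 + (-44 : S) * x^18 * z^1 * ix^16 * iq^2 + (99 : S) * x^18 * z^1 * ix^19 * iq^1 + (-66 : S) * x^18 * z^1 * ix^22 + x^19 * z^1 * ix^8 * iq^5 + (12 : S) * x^19 * z^1 * ix^14 * iq^3 + (-44 : S) * x^19 * z^1 * ix^17 * iq^2 + (99 : S) * x^19 * z^1 * ix^20 * iq^1 + (-66 : S) * x^19 * z^1 * ix^23 + x^20 * z^1 * ix^9 * iq^5 + (14 : S) * x^20 * z^1 * ix^15 * iq^3 + (-44 : S) * x^20 * z^1 * ix^18 * iq^2 + (99 : S) * x^20 * z^1 * ix^21 * iq^1 + (-66 : S) * x^20 * z^1 * ix^24 + (-1 : S) * x^21 * z^1 * ix^10 * iq^5 + (14 : S) * x^21 * z^1 * ix^16 * iq^3 + (-44 : S) * x^21 * z^1 * ix^19 * iq^2 + (99 : S) * x^21 * z^1 * ix^22 * iq^1 + (-1 : S) * x^22 * z^1 * ix^11 * iq^5 + (14 : S) * x^22 * z^1 * ix^17 * iq^3 + (-44 : S) * x^22 * z^1 * ix^20 * iq^2 + (99 : S)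 * x^22 * z^1 * ix^23 * iq^1 + (-1 : S) * x^23 * z^1 * ix^12 * iq^5 + (-4 : S) * x^23 * z^1 * ix^15 * iq^4 + (14 : S) * x^23 * z^1 * ix^18 * iq^3 + (-44 : S) * x^23 * z^1 * ix^21 * iq^2 + (99 : S) * x^23 * z^1 * ix^24 * iq^1 + (-1 : S) * x^24 * z^1 * ix^13 * iq^5 + (-4 : S) * x^24 * z^1 * ix^16 * iq^4 + (14 : S) * x^24 * z^1 * ix^19 * iq^3 + (-44 : S) * x^24 * z^1 * ix^22 * iq^2 + (-1 : S) * x^25 * z^1 * ix^14 * iq^5 + (-4 : S) * x^25 * z^1 * ix^17 * iq^4 + (13 : S) * x^25 * z^1 * ix^20 * iq^3 + (-44 : S) * x^25 * z^1 * ix^23 * iq^2 + x^26 * z^1 * ix^15 * iq^5 + (-4 : S) * x^26 * z^1 * ix^18 * iq^4 + (13 : S) * x^26 * z^1 * ix^21 * iq^3 + (-44 : S) * x^26 * z^1 * ix^24 * iq^2 + x^27 * z^1 * ix^16 * iq^5 + (-4 : S) * x^27 * z^1 * ix^19 * iq^4 + (13 : S) * x^27 * z^1 * ix^22 * iq^3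 + x^28 * z^1 * ix^17 * iq^5 + (-2 : S) * x^28 * z^1 * ix^20 * iq^4 + (13 : S) * x^28 * z^1 * ix^23 * iq^3 + x^29 * z^1 * ix^18 * iq^5 + (-2 : S) * x^29 * z^1 * ix^21 * iq^4 + (13 : S) * x^29 * z^1 * ix^24 * iq^3 + x^30 * z^1 * ix^19 * iq^5 + (-2 : S) * x^30 * z^1 * ix^22 * iq^4 + (-2 : S) * x^31 * z^1 * ix^23 * iq^4 + (-2 : S) * x^32 * z^1 * ix^24 * iq^4) * hX + (z^17 * ix^25 * iq^1 + (-1 : S) * z^19 * ix^25 * iq^2 + z^21 * ix^25 * iq^3 + (-1 : S) * x^1 * z^13 * ix^20 * iq^1 + (3 : S) * x^1 * z^15 * ix^20 * iq^2 + (-3 : S) * x^1 * z^17 * ix^20 * iq^3 + x^1 * z^19 * ix^20 * iq^4 + (-1 : S) * x^2 * z^1 * iq^2 + (-1 : S) * x^2 * z^3 * iq^3 + (-2 : S) * x^2 * z^11 * ix^15 * iq^2 + (4 : S) * x^2 * z^13 * ix^15 * iq^3 + (-2 : S) * x^2 * z^15 * ix^15 * iq^4 + (-2 : S) * x^3 *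 z^9 * ix^10 * iq^3 + (2 : S) * x^3 * z^11 * ix^10 * iq^4 + (-4 : S) * x^3 * z^15 * ix^25 * iq^1 + (3 : S) * x^3 * z^17 * ix^25 * iq^2 + (-2 : S) * x^3 * z^19 * ix^25 * iq^3 + (-1 : S) * x^4 * z^7 * ix^5 * iq^4 + (4 : S) * x^4 * z^11 * ix^20 * iq^1 + (-9 : S) * x^4 * z^13 * ix^20 * iq^2 + (6 : S) * x^4 * z^15 * ix^20 * iq^3 + (-1 : S) * x^4 * z^17 * ix^20 * iq^4 + x^5 * z^1 * iq^3 + (6 : S) * x^5 * z^9 * ix^15 * iq^2 + (-8 : S) * x^5 * z^11 * ix^15 * iq^3 + (2 : S) * x^5 * z^13 * ix^15 * iq^4 + (4 : S) * x^6 * z^7 * ix^10 * iq^3 + (-2 : S) * x^6 * z^9 * ix^10 * iq^4 + x^6 * z^11 * ix^25 + (7 : S) * x^6 * z^13 * ix^25 * iq^1 + (-3 : S) * x^6 * z^15 * ix^25 * iq^2 + (2 : S) * x^6 * z^17 * ix^25 * iq^3 + x^7 * z^5 * ix^5 * iq^4 + (-6 : S) * x^7 * z^9 * ix^20 * iq^1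 + (10 : S) * x^7 * z^11 * ix^20 * iq^2 + (-5 : S) * x^7 * z^13 * ix^20 * iq^3 + x^7 * z^15 * ix^20 * iq^4 + (-6 : S) * x^8 * z^7 * ix^15 * iq^2 + (6 : S) * x^8 * z^9 * ix^15 * iq^3 + (-2 : S) * x^8 * z^11 * ix^15 * iq^4 + (-2 : S) * x^9 * z^5 * ix^10 * iq^3 + (2 : S) * x^9 * z^7 * ix^10 * iq^4 + (-5 : S) * x^9 * z^9 * ix^25 + (-8 : S) * x^9 * z^11 * ix^25 * iq^1 + x^9 * z^13 * ix^25 * iq^2 + (-2 : S) * x^9 * z^15 * ix^25 * iq^3 + (-1 : S) * x^10 * z^1 * ix^5 * iq^3 + (-1 : S) * x^10 * z^3 * ix^5 * iq^4 + (4 : S) * x^10 * z^7 * ix^20 * iq^1 + (-6 : S) * x^10 * z^9 * ix^20 * iq^2 + (4 : S) * x^10 * z^11 * ix^20 * iq^3 + (-1 : S) * x^10 * z^13 * ix^20 * iq^4 + (2 : S) * x^11 * z^5 * ix^15 * iq^2 + (-4 : S) * x^11 * z^7 * ix^15 * iq^3 + (2 : S) * x^11 * z^9 * ix^15 * iq^4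 + (-2 : S) * x^12 * z^5 * ix^10 * iq^4 + (13 : S) * x^12 * z^7 * ix^25 + (9 : S) * x^12 * z^9 * ix^25 * iq^1 + x^12 * z^11 * ix^25 * iq^2 + (2 : S) * x^12 * z^13 * ix^25 * iq^3 + x^13 * z^1 * ix^5 * iq^4 + (-1 : S) * x^13 * z^5 * ix^20 * iq^1 + (3 : S) * x^13 * z^7 * ix^20 * iq^2 + (-3 : S) * x^13 * z^9 * ix^20 * iq^3 + x^13 * z^11 * ix^20 * iq^4 + (2 : S) * x^14 * z^5 * ix^15 * iq^3 + (-2 : S) * x^14 * z^7 * ix^15 * iq^4 + (2 : S) * x^15 * z^1 * ix^10 * iq^3 + (2 : S) * x^15 * z^3 * ix^10 * iq^4 + (-25 : S) * x^15 * z^5 * ix^25 + (-12 : S) * x^15 * z^7 * ix^25 * iq^1 + (-3 : S) * x^15 * z^9 * ix^25 * iq^2 + (-2 : S) * x^15 * z^11 * ix^25 * iq^3 + (-1 : S) * x^16 * z^5 * ix^20 * iq^2 + (2 : S) * x^16 * z^7 * ix^20 * iq^3 + (-1 : S) * x^16 * z^9 * ix^20 * iq^4 + (2 : S) * x^17 *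 z^5 * ix^15 * iq^4 + (-2 : S) * x^18 * z^1 * ix^10 * iq^4 + (42 : S) * x^18 * z^3 * ix^25 + (17 : S) * x^18 * z^5 * ix^25 * iq^1 + (5 : S) * x^18 * z^7 * ix^25 * iq^2 + (2 : S) * x^18 * z^9 * ix^25 * iq^3 + (-1 : S) * x^19 * z^5 * ix^20 * iq^3 + x^19 * z^7 * ix^20 * iq^4 + (-2 : S) * x^20 * z^1 * ix^15 * iq^3 + (-2 : S) * x^20 * z^3 * ix^15 * iq^4 + (-66 : S) * x^21 * z^1 * ix^25 + (-24 : S) * x^21 * z^3 * ix^25 * iq^1 + (-7 : S) * x^21 * z^5 * ix^25 * iq^2 + (-2 : S) * x^21 * z^7 * ix^25 * iq^3 + (-1 : S) * x^22 * z^5 * ix^20 * iq^4 + (2 : S) * x^23 * z^1 * ix^15 * iq^4 + (33 : S) * x^24 * z^1 * ix^25 * iq^1 + (9 : S) * x^24 * z^3 * ix^25 * iq^2 + (2 : S) * x^24 * z^5 * ix^25 * iq^3 + x^25 * z^1 * ix^20 * iq^3 + x^25 * z^3 * ix^20 * iq^4 + (-11 : S) * x^27 * z^1 * ix^25 * iq^2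 + (-2 : S) * x^27 * z^3 * ix^25 * iq^3 + (-1 : S) * x^28 * z^1 * ix^20 * iq^4 + (2 : S) * x^30 * z^1 * ix^25 * iq^3) * hQ + ((20 : S) * z^1 * ix^1 * iq^1 + (-14 : S) * z^1 * ix^4 + (8 : S) * z^3 * ix^7 + (-5 : S) * z^5 * ix^10 + (2 : S) * z^7 * ix^13 + (-1 : S) * z^9 * ix^16 + (-9 : S) * x^2 * z^1 * iq^2 + (3 : S) * x^5 * z^1 * iq^3 + (-1 : S) * x^8 * z^1 * iq^4) * hchar

/-- **Pullback of the local cohomology class along the `α₅`-quotient with an `E₈^0`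
singularity** (char 5, `x = X⁵`, `y = Z² + X³`, `z = Z⁵`).
Let `R = k[X,Z]`, `q = Z² + X³`, `L = R[1/(Xq)]`, and `w = τ(Z⁵ X⁻⁵ q⁻¹) ∈ W(L)`
(5-typical).  Then `w ≡ −V(τ(Z X⁻¹ q⁻¹))`, i.e. `w + V(τ(Z X⁻¹ q⁻¹)) ≡ 0`, in `W₂`
modulo `W₂(R[1/X]) + W₂(R[1/q])`. -/
theorem alpha5_quotient_E8_pullback (k : Type) [Field k] [CharP k 5]
    (q : MvPolynomial (Fin 2) k) (hq : q = X 1 ^ 2 + X 0 ^ 3)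
    (ι : MvPolynomial (Fin 2) k →+*
      Localization.Away ((X 0 : MvPolynomial (Fin 2) k) * q))
    (hι : ι = algebraMap _ _)
    (uX uq : (Localization.Away ((X 0 : MvPolynomial (Fin 2) k) * q))ˣ)
    (huX : (uX : Localization.Away ((X 0 : MvPolynomial (Fin 2) k) * q)) = ι (X 0))
    (huq : (uq : Localization.Away ((X 0 : MvPolynomial (Fin 2) k) * q)) = ι q)
    (w : WittVector 5 (Localization.Away ((X 0 : MvPolynomial (Fin 2) k) * q)))
    (hw : w = WittVector.teichmuller 5
      (ι (X 1 ^ 5) *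
        (↑uX⁻¹ : Localization.Away ((X 0 : MvPolynomial (Fin 2) k) * q)) ^ 5 *
        (↑uq⁻¹ : Localization.Away ((X 0 : MvPolynomial (Fin 2) k) * q)))) :
    ∃ u v : WittVector 5 (Localization.Away ((X 0 : MvPolynomial (Fin 2) k) * q)),
      (∀ i : ℕ, ∃ (s : MvPolynomial (Fin 2) k) (t : ℕ),
        u.coeff i * ι (X 0) ^ t = ι s) ∧
      (∀ i : ℕ, ∃ (s : MvPolynomial (Fin 2) k) (t : ℕ),
        v.coeff i * ι q ^ t = ι s) ∧
      ∀ i < 2, (w + WittVector.verschiebung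
        (WittVector.teichmuller 5
          ((ι (X 1) * ↑uX⁻¹ * ↑uq⁻¹ :
            Localization.Away ((X 0 : MvPolynomial (Fin 2) k) * q)))) - u - v).coeff i
        = 0 := by
  subst hq
  obtain ⟨ix, hix⟩ : ∃ a : Localization.Away ((X 0 : MvPolynomial (Fin 2) k) * (X 1 ^ 2 + X 0 ^ 3)), a = ↑uX⁻¹ := ⟨_, rfl⟩
  obtain ⟨iq, hiq⟩ : ∃ a : Localization.Away ((X 0 : MvPolynomial (Fin 2) k) * (X 1 ^ 2 + X 0 ^ 3)), a = ↑uq⁻¹ := ⟨_, rfl⟩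
  rw [← hix, ← hiq]
  rw [map_pow, ← hix, ← hiq] at hw

  have hX : ι (X 0 : MvPolynomial (Fin 2) k) * ix = 1 := by
    rw [hix, ← huX]; exact uX.mul_inv
  have hQ : (ι (X 1 : MvPolynomial (Fin 2) k)^2 + ι (X 0 : MvPolynomial (Fin 2) k)^3) * iq = 1 := by
    have h := uq.mul_inv
    rw [huq, map_add, map_pow, map_pow] at h
    rw [hiq]
    exact h
  have hchar : (5 : Localization.Away ((X 0 : MvPolynomial (Fin 2) k) * (X 1 ^ 2 + X 0 ^ 3))) = 0 := by
    have h5k : (5 : k) = 0 := by exact_mod_cast CharP.cast_eq_zero k 5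
    have h1 : ι ((5 : MvPolynomial (Fin 2) k)) = 5 := map_ofNat ι 5
    have h2 : (5 : MvPolynomial (Fin 2) k) = C (5 : k) :=
      (map_ofNat (C : k →+* MvPolynomial (Fin 2) k) 5).symm
    rw [← h1, h2, h5k, map_zero, map_zero]
  have I1 : (ι (X 1 : MvPolynomial (Fin 2) k)^5 * ix^5 * iq) - ((ι (X 1 : MvPolynomial (Fin 2) k)^3 - ι (X 1 : MvPolynomial (Fin 2) k) * ι (X 0 : MvPolynomial (Fin 2) k)^3) * ix^5) - (ι (X 1 : MvPolynomial (Fin 2) k) * ι (X 0 : MvPolynomial (Fin 2) k) * iq) = 0 := I1gen (ι (X 0 : MvPolynomial (Fin 2) k)) (ι (X 1 : MvPolynomial (Fin 2) k)) ix iq hX hQ hchar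
  have I2 : (ι (X 1 : MvPolynomial (Fin 2) k) * ix * iq) - ((ι (X 1 : MvPolynomial (Fin 2) k)^11 + 3 * ι (X 0 : MvPolynomial (Fin 2) k)^6 * ι (X 1 : MvPolynomial (Fin 2) k)^7 + 2 * ι (X 0 : MvPolynomial (Fin 2) k)^12 * ι (X 1 : MvPolynomial (Fin 2) k)^3 + 4 * ι (X 0 : MvPolynomial (Fin 2) k)^15 * ι (X 1 : MvPolynomial (Fin 2) k)) * ix^19) - ((ι (X 0 : MvPolynomial (Fin 2) k)^2 * ι (X 1 : MvPolynomial (Fin 2) k)^5 + 2 * ι (X 0 : MvPolynomial (Fin 2) k)^8 * ι (X 1 : MvPolynomial (Fin 2) k)) * iq^4) - ((ι (X 1 : MvPolynomial (Fin 2) k)^5 * ix^5 * iq)^4*(-((ι (X 1 : MvPolynomial (Fin 2) k)^3 - ι (X 1 : MvPolynomial (Fin 2) k) * ι (X 0 : MvPolynomial (Fin 2) k)^3) * ix^5)) + 2*(ι (X 1 : MvPolynomial (Fin 2) k)^5 * ix^5 * iq)^3*(-((ι (X 1 : MvPolynomial (Fin 2) k)^3 - ι (X 1 : MvPolynomial (Fin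 2) k) * ι (X 0 : MvPolynomial (Fin 2) k)^3) * ix^5))^2 + 2*(ι (X 1 : MvPolynomial (Fin 2) k)^5 * ix^5 * iq)^2*(-((ι (X 1 : MvPolynomial (Fin 2) k)^3 - ι (X 1 : MvPolynomial (Fin 2) k) * ι (X 0 : MvPolynomial (Fin 2) k)^3) * ix^5))^3 + (ι (X 1 : MvPolynomial (Fin 2) k)^5 * ix^5 * iq)*(-((ι (X 1 : MvPolynomial (Fin 2) k)^3 - ι (X 1 : MvPolynomial (Fin 2) k) * ι (X 0 : MvPolynomial (Fin 2) k)^3) * ix^5))^4) - (((ι (X 1 : MvPolynomial (Fin 2) k)^5 * ix^5 * iq) - ((ι (X 1 : MvPolynomial (Fin 2) k)^3 - ι (X 1 : MvPolynomial (Fin 2) k) * ι (X 0 : MvPolynomial (Fin 2) k)^3) * ix^5))^4*(-(ι (X 1 : MvPolynomial (Fin 2) k) * ι (X 0 : MvPolynomial (Fin 2) k) * iq)) + 2*((ι (X 1 : MvPolynomial (Fin 2) k)^5 * ix^5 * iq) - ((ι (X 1 : MvPolynomial (Fin 2) k)^3 - ι (X 1 : MvPolynomial (Fin 2) k) * ι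 (X 0 : MvPolynomial (Fin 2) k)^3) * ix^5))^3*(-(ι (X 1 : MvPolynomial (Fin 2) k) * ι (X 0 : MvPolynomial (Fin 2) k) * iq))^2 + 2*((ι (X 1 : MvPolynomial (Fin 2) k)^5 * ix^5 * iq) - ((ι (X 1 : MvPolynomial (Fin 2) k)^3 - ι (X 1 : MvPolynomial (Fin 2) k) * ι (X 0 : MvPolynomial (Fin 2) k)^3) * ix^5))^2*(-(ι (X 1 : MvPolynomial (Fin 2) k) * ι (X 0 : MvPolynomial (Fin 2) k) * iq))^3 + ((ι (X 1 : MvPolynomial (Fin 2) k)^5 * ix^5 * iq) - ((ι (X 1 : MvPolynomial (Fin 2) k)^3 - ι (X 1 : MvPolynomial (Fin 2) k) * ι (X 0 : MvPolynomial (Fin 2) k)^3) * ix^5))*(-(ι (X 1 : MvPolynomial (Fin 2) k) * ι (X 0 : MvPolynomial (Fin 2) k) * iq))^4) = 0 := I2gen (ι (X 0 : MvPolynomial (Fin 2) k)) (ι (X 1 : MvPolynomial (Fin 2) k)) ix iq hX hQ hchar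
  have hfmem : (ι (X 1 : MvPolynomial (Fin 2) k)^3 - ι (X 1 : MvPolynomial (Fin 2) k) * ι (X 0 : MvPolynomial (Fin 2) k)^3) * ix^5 ∈ locSubringE8 ι (X 0 : MvPolynomial (Fin 2) k) :=
    (mem_locSubringE8 ι _ _).2 ⟨X 1^3 - X 1 * X 0^3, 5, by
      simp only [map_sub, map_mul, map_pow]
      linear_combination ((ι (X 1 : MvPolynomial (Fin 2) k)^3 - ι (X 1 : MvPolynomial (Fin 2) k) * ι (X 0 : MvPolynomial (Fin 2) k)^3) * ((ι (X 0 : MvPolynomial (Fin 2) k) * ix)^4 + (ι (X 0 : MvPolynomial (Fin 2) k) * ix)^3 + (ι (X 0 : MvPolynomial (Fin 2) k) * ix)^2 + (ι (X 0 : MvPolynomial (Fin 2) k) * ix)^1 + 1)) * hX⟩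
  have hhmem : (ι (X 1 : MvPolynomial (Fin 2) k)^11 + 3 * ι (X 0 : MvPolynomial (Fin 2) k)^6 * ι (X 1 : MvPolynomial (Fin 2) k)^7 + 2 * ι (X 0 : MvPolynomial (Fin 2) k)^12 * ι (X 1 : MvPolynomial (Fin 2) k)^3 + 4 * ι (X 0 : MvPolynomial (Fin 2) k)^15 * ι (X 1 : MvPolynomial (Fin 2) k)) * ix^19 ∈ locSubringE8 ι (X 0 : MvPolynomial (Fin 2) k) :=
    (mem_locSubringE8 ι _ _).2 ⟨X 1^11 + 3 * X 0^6 * X 1^7 + 2 * X 0^12 * X 1^3 + 4 * X 0^15 * X 1, 19, by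
      simp only [map_add, map_mul, map_pow, map_ofNat]
      linear_combination ((ι (X 1 : MvPolynomial (Fin 2) k)^11 + 3 * ι (X 0 : MvPolynomial (Fin 2) k)^6 * ι (X 1 : MvPolynomial (Fin 2) k)^7 + 2 * ι (X 0 : MvPolynomial (Fin 2) k)^12 * ι (X 1 : MvPolynomial (Fin 2) k)^3 + 4 * ι (X 0 : MvPolynomial (Fin 2) k)^15 * ι (X 1 : MvPolynomial (Fin 2) k)) * ((ι (X 0 : MvPolynomial (Fin 2) k) * ix)^18 + (ι (X 0 : MvPolynomial (Fin 2) k) * ix)^17 + (ι (X 0 : MvPolynomial (Fin 2) k) * ix)^16 + (ι (X 0 : MvPolynomial (Fin 2) k) * ix)^15 + (ι (X 0 : MvPolynomial (Fin 2) k) * ix)^14 + (ι (X 0 : MvPolynomial (Fin 2) k) * ix)^13 + (ι (X 0 : MvPolynomial (Fin 2) k) * ix)^12 + (ι (X 0 : MvPolynomial (Fin 2) k) * ix)^11 + (ι (X 0 : MvPolynomial (Fin 2) k) * ix)^10 + (ι (X 0 : MvPolynomial (Fin 2) k) * ix)^9 + (ι (X 0 : MvPolynomial (Fin 2) k) * ix)^8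 + (ι (X 0 : MvPolynomial (Fin 2) k) * ix)^7 + (ι (X 0 : MvPolynomial (Fin 2) k) * ix)^6 + (ι (X 0 : MvPolynomial (Fin 2) k) * ix)^5 + (ι (X 0 : MvPolynomial (Fin 2) k) * ix)^4 + (ι (X 0 : MvPolynomial (Fin 2) k) * ix)^3 + (ι (X 0 : MvPolynomial (Fin 2) k) * ix)^2 + (ι (X 0 : MvPolynomial (Fin 2) k) * ix)^1 + 1)) * hX⟩
  have hgmem : ι (X 1 : MvPolynomial (Fin 2) k) * ι (X 0 : MvPolynomial (Fin 2) k) * iq ∈ locSubringE8 ι ((X 1 : MvPolynomial (Fin 2) k)^2 + (X 0 : MvPolynomial (Fin 2) k)^3) :=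
    (mem_locSubringE8 ι _ _).2 ⟨X 1 * X 0, 1, by
      simp only [map_add, map_mul, map_pow]
      linear_combination (ι (X 1 : MvPolynomial (Fin 2) k) * ι (X 0 : MvPolynomial (Fin 2) k)) * hQ⟩
  have hemem : (ι (X 0 : MvPolynomial (Fin 2) k)^2 * ι (X 1 : MvPolynomial (Fin 2) k)^5 + 2 * ι (X 0 : MvPolynomial (Fin 2) k)^8 * ι (X 1 : MvPolynomial (Fin 2) k)) * iq^4 ∈ locSubringE8 ι ((X 1 : MvPolynomial (Fin 2) k)^2 + (X 0 : MvPolynomial (Fin 2) k)^3) :=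
    (mem_locSubringE8 ι _ _).2 ⟨X 0^2 * X 1^5 + 2 * X 0^8 * X 1, 4, by
      simp only [map_add, map_mul, map_pow, map_ofNat]
      linear_combination ((ι (X 0 : MvPolynomial (Fin 2) k)^2 * ι (X 1 : MvPolynomial (Fin 2) k)^5 + 2 * ι (X 0 : MvPolynomial (Fin 2) k)^8 * ι (X 1 : MvPolynomial (Fin 2) k)) * (((ι (X 1 : MvPolynomial (Fin 2) k)^2 + ι (X 0 : MvPolynomial (Fin 2) k)^3) * iq)^3 + ((ι (X 1 : MvPolynomial (Fin 2) k)^2 + ι (X 0 : MvPolynomial (Fin 2) k)^3) * iq)^2 + ((ι (X 1 : MvPolynomial (Fin 2) k)^2 + ι (X 0 : MvPolynomial (Fin 2) k)^3) * iq)^1 + 1)) * hQ⟩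
  set UW : WittVector 5 ↥(locSubringE8 ι (X 0 : MvPolynomial (Fin 2) k)) :=
    WittVector.teichmuller 5 (⟨_, hfmem⟩ : ↥(locSubringE8 ι (X 0 : MvPolynomial (Fin 2) k)))
      + WittVector.verschiebung (WittVector.teichmuller 5 (⟨_, hhmem⟩ : ↥(locSubringE8 ι (X 0 : MvPolynomial (Fin 2) k)))) with hUW
  set VW : WittVector 5 ↥(locSubringE8 ι ((X 1 : MvPolynomial (Fin 2) k)^2 + (X 0 : MvPolynomial (Fin 2) k)^3)) :=
    WittVector.teichmuller 5 (⟨_, hgmem⟩ : ↥(locSubringE8 ι ((X 1 : MvPolynomial (Fin 2) k)^2 + (X 0 : MvPolynomial (Fin 2) k)^3)))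
      + WittVector.verschiebung (WittVector.teichmuller 5 (⟨_, hemem⟩ : ↥(locSubringE8 ι ((X 1 : MvPolynomial (Fin 2) k)^2 + (X 0 : MvPolynomial (Fin 2) k)^3)))) with hVW
  refine ⟨WittVector.map (locSubringE8 ι (X 0 : MvPolynomial (Fin 2) k)).subtype UW,
    WittVector.map (locSubringE8 ι ((X 1 : MvPolynomial (Fin 2) k)^2 + (X 0 : MvPolynomial (Fin 2) k)^3)).subtype VW, ?_, ?_, ?_⟩
  · intro i
    obtain ⟨s, t, hst⟩ := (mem_locSubringE8 ι _ _).1 (UW.coeff i).2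
    exact ⟨s, t, by rw [WittVector.map_coeff]; exact hst⟩
  · intro i
    obtain ⟨s, t, hst⟩ := (mem_locSubringE8 ι _ _).1 (VW.coeff i).2
    exact ⟨s, t, by rw [WittVector.map_coeff]; exact hst⟩
  · intro i hi
    have hueq : WittVector.map (locSubringE8 ι (X 0 : MvPolynomial (Fin 2) k)).subtype UW
        = WittVector.teichmuller 5 ((ι (X 1 : MvPolynomial (Fin 2) k)^3 - ι (X 1 : MvPolynomial (Fin 2) k) * ι (X 0 : MvPolynomial (Fin 2) k)^3) * ix^5)
          + WittVector.verschiebung (WittVector.teichmuller 5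
            ((ι (X 1 : MvPolynomial (Fin 2) k)^11 + 3 * ι (X 0 : MvPolynomial (Fin 2) k)^6 * ι (X 1 : MvPolynomial (Fin 2) k)^7 + 2 * ι (X 0 : MvPolynomial (Fin 2) k)^12 * ι (X 1 : MvPolynomial (Fin 2) k)^3 + 4 * ι (X 0 : MvPolynomial (Fin 2) k)^15 * ι (X 1 : MvPolynomial (Fin 2) k)) * ix^19)) := by
      rw [hUW, map_add, WittVector.map_verschiebung, WittVector.map_teichmuller, WittVector.map_teichmuller]
      rfl
    have hveq : WittVector.map (locSubringE8 ι ((X 1 : MvPolynomial (Fin 2) k)^2 + (X 0 : MvPolynomial (Fin 2) k)^3)).subtype VW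
        = WittVector.teichmuller 5 (ι (X 1 : MvPolynomial (Fin 2) k) * ι (X 0 : MvPolynomial (Fin 2) k) * iq)
          + WittVector.verschiebung (WittVector.teichmuller 5
            ((ι (X 0 : MvPolynomial (Fin 2) k)^2 * ι (X 1 : MvPolynomial (Fin 2) k)^5 + 2 * ι (X 0 : MvPolynomial (Fin 2) k)^8 * ι (X 1 : MvPolynomial (Fin 2) k)) * iq^4)) := by
      rw [hVW, map_add, WittVector.map_verschiebung, WittVector.map_teichmuller, WittVector.map_teichmuller]
      rfl
    rw [hw, hueq, hveq]
    interval_cases i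
    · simp only [AlphaAuxE8.sub_zero', WittVector.add_coeff_zero, WittVector.teichmuller_coeff_zero,
        WittVector.verschiebung_coeff_zero, add_zero]
      linear_combination I1
    · simp only [AlphaAuxE8.sub_one, AlphaAuxE8.add_one, AlphaAuxE8.sub_zero',
        WittVector.add_coeff_zero, WittVector.teichmuller_coeff_zero, AlphaAuxE8.teich_one,
        AlphaAuxE8.versch_one, WittVector.verschiebung_coeff_zero, add_zero]
      linear_combination I2
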